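/- If a ring R has only trivial idempotents, then the polynomial ring R[x], the power series ring R[[x]], and the Laurent polynomial ring R[x, x^{-1}] are all i-reversible. -/

import Mathlib

/-- A ring is *i-reversible* if whenever `a * b` is a non-zero idempotent, `b * a` is an
idempotent. -/
def IsIReversible (S : Type*) [Ring S] : Prop :=
  ∀ a b : S, IsIdempotentElem (a * b) → a * b ≠ 0 → IsIdempotentElem (b * a)

/-- A ring is *reversible* if `a * b = 0` implies `b * a = 0`. -/
def IsReversible (S : Type*) [Ring S] : Prop :=
  ∀ a b : S, a * b = 0 → b * a = 0

/-- A ring has only trivial idempotents if its only idempotents are `0` and `1`. -/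
def HasOnlyTrivialIdempotents (S : Type*) [Ring S] : Prop :=
  ∀ e : S, IsIdempotentElem e → e = 0 ∨ e = 1

section Aux

open Finset LaurentPolynomial

variable {R : Type*} [Ring R]

/-- A ring with only trivial idempotents is i-reversible. -/
lemma hoti_isIReversible {S : Type*} [Ring S] (h : HasOnlyTrivialIdempotents S) :
    IsIReversible S := by
  intro a b hab hne
  rcases h _ hab with h0 | h1
  · exact absurd h0 hne
  · show b * a * (b * a) = b * a
    rw [mul_assoc, ← mul_assoc a b a, h1, one_mul]

/-- An idempotent power series with zero constant coefficient is zero. -/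
lemma powerSeries_idem_eq_zero {φ : PowerSeries R} (hφ : IsIdempotentElem φ)
    (h0 : PowerSeries.constantCoeff φ = 0) : φ = 0 := by
  have key : ∀ n, PowerSeries.coeff n φ = 0 := by
    intro n
    induction n using Nat.strong_induction_on with
    | _ n ih =>
      have h := congrArg (PowerSeries.coeff n) hφ
      rw [PowerSeries.coeff_mul] at h
      rw [← h]
      apply Finset.sum_eq_zero
      rintro ⟨i, j⟩ hij
      rw [Finset.HasAntidiagonal.mem_antidiagonal] at hij
      rcases lt_or_eq_of_le (Nat.le.intro hij : i ≤ n) with hi | hi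
      · rw [ih i hi, zero_mul]
      · subst hi
        have hj : j = 0 := by omega
        subst hj
        rw [PowerSeries.coeff_zero_eq_constantCoeff, h0, mul_zero]
  ext n
  rw [key n, map_zero]

lemma powerSeries_hoti (h : HasOnlyTrivialIdempotents R) :
    HasOnlyTrivialIdempotents (PowerSeries R) := by
  intro φ hφ
  have hc : IsIdempotentElem (PowerSeries.constantCoeff φ) := by
    show _ * _ = _
    rw [← map_mul, hφ]
  rcases h _ hc with h0 | h1
  · exact Or.inl (powerSeries_idem_eq_zero hφ h0)
  · right
    have h2 : (1 - φ) = 0 :=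
      powerSeries_idem_eq_zero hφ.one_sub (by rw [map_sub, map_one, h1, sub_self])
    rw [sub_eq_zero] at h2
    exact h2.symm

/-- Sum-of-coefficients ring hom on Laurent polynomials. -/
noncomputable def laurentEv : LaurentPolynomial R →+* R :=
  AddMonoidAlgebra.liftNCRingHom (RingHom.id R) (1 : Multiplicative ℤ →* R)
    (fun x y => by simp)

lemma laurentEv_single (n : ℤ) (r : R) :
    laurentEv (AddMonoidAlgebra.single n r : LaurentPolynomial R) = r := by
  show AddMonoidAlgebra.liftNC _ _ _ = r
  rw [AddMonoidAlgebra.liftNC_single]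
  simp

lemma laurentEv_T_sub_one : laurentEv ((T 1 : LaurentPolynomial R) - 1) = 0 := by
  rw [map_sub, map_one]
  have : (T 1 : LaurentPolynomial R) = AddMonoidAlgebra.single (1 : ℤ) (1 : R) := rfl
  rw [this, laurentEv_single, sub_self]

lemma T_sub_one_dvd (n : ℤ) :
    ((T 1 : LaurentPolynomial R) - 1) ∣ (T n - 1) := by
  have key : ∀ m : ℕ, ((T 1 : LaurentPolynomial R) - 1) ∣ (T (m : ℤ) - 1) := by
    intro m
    refine ⟨∑ i ∈ Finset.range m, (T 1 : LaurentPolynomial R) ^ i, ?_⟩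
    rw [mul_geom_sum, T_pow, mul_one]
  rcases le_or_gt 0 n with hn | hn
  · obtain ⟨m, rfl⟩ := Int.eq_ofNat_of_zero_le hn
    exact key m
  · obtain ⟨c, hc⟩ := key (-n).toNat
    have hmn : ((-n).toNat : ℤ) = -n := Int.toNat_of_nonneg (by omega)
    refine ⟨-(T n * c), ?_⟩
    have hcomm : Commute ((T 1 : LaurentPolynomial R) - 1) (T n) :=
      ((commute_T 1 (T n)).sub_left (Commute.one_left _))
    calc T n - 1 = -(T n * (T ((-n).toNat : ℤ) - 1)) := by
          rw [mul_sub, mul_one, ← T_add, hmn, add_neg_cancel, T_zero, neg_sub]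
      _ = -(T n * (((T 1 : LaurentPolynomial R) - 1) * c)) := by rw [← hc]
      _ = ((T 1 : LaurentPolynomial R) - 1) * (-(T n * c)) := by
          rw [← mul_assoc, ← hcomm.eq, mul_assoc, mul_neg]

lemma laurentEv_eq_sum (f : LaurentPolynomial R) :
    laurentEv f = ∑ n ∈ f.coeff.support, f.coeff n := by
  conv_lhs => rw [← AddMonoidAlgebra.sum_coeff_single f, Finsupp.sum, map_sum]
  exact Finset.sum_congr rfl fun n _ => laurentEv_single n (f.coeff n)

lemma dvd_of_laurentEv_zero {f : LaurentPolynomial R} (hf : laurentEv f = 0) :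
    ((T 1 : LaurentPolynomial R) - 1) ∣ f := by
  have hrepr : f = ∑ n ∈ f.coeff.support, C (f.coeff n) * (T n - 1) := by
    have h1 : ∑ n ∈ f.coeff.support, (C (f.coeff n) : LaurentPolynomial R) * (T n - 1)
        = (∑ n ∈ f.coeff.support, C (f.coeff n) * T n) - ∑ n ∈ f.coeff.support, C (f.coeff n) := by
      rw [← Finset.sum_sub_distrib]
      exact Finset.sum_congr rfl fun n _ => by rw [mul_sub, mul_one]
    have h2 : ∑ n ∈ f.coeff.support, (C (f.coeff n) : LaurentPolynomial R) * T n = f := by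
      conv_rhs => rw [← AddMonoidAlgebra.sum_coeff_single f, Finsupp.sum]
      exact Finset.sum_congr rfl fun n _ => (single_eq_C_mul_T (f.coeff n) n).symm
    have h3 : ∑ n ∈ f.coeff.support, (C (f.coeff n) : LaurentPolynomial R) = C (laurentEv f) := by
      rw [laurentEv_eq_sum, map_sum]
    rw [h1, h2, h3, hf, map_zero, sub_zero]
  rw [hrepr]
  apply Finset.dvd_sum
  intro n _
  obtain ⟨c, hc⟩ := T_sub_one_dvd (R := R) n
  have hcomm : Commute ((T 1 : LaurentPolynomial R) - 1) (C (f.coeff n)) :=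
    ((commute_T 1 (C (f.coeff n))).sub_left (Commute.one_left _))
  exact ⟨C (f.coeff n) * c, by rw [hc, ← mul_assoc, ← hcomm.eq, mul_assoc]⟩

/-- coefficient formula for multiplication by `T 1 - 1`. -/
lemma T_sub_one_mul_apply (f : LaurentPolynomial R) (y : ℤ) :
    (((T 1 : LaurentPolynomial R) - 1) * f).coeff y = f.coeff (y - 1) - f.coeff y := by
  rw [sub_mul, one_mul]
  have h1 : ((T 1 : LaurentPolynomial R) * f).coeff y = f.coeff (y - 1) := by
    have h0 : (T 1 : LaurentPolynomial R) = AddMonoidAlgebra.single (1:ℤ) (1:R) := rfl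
    rw [h0, AddMonoidAlgebra.coeff_single_mul_apply, one_mul]
    congr 1
    omega
  calc (((T 1 : LaurentPolynomial R) * f - f)).coeff y
      = ((T 1 : LaurentPolynomial R) * f).coeff y - f.coeff y := rfl
    _ = f.coeff (y - 1) - f.coeff y := by rw [h1]

/-- Support window for a Laurent polynomial. -/
def LBounds (f : LaurentPolynomial R) (a b : ℤ) : Prop :=
  f.coeff a ≠ 0 ∧ f.coeff b ≠ 0 ∧ ∀ y : ℤ, f.coeff y ≠ 0 → a ≤ y ∧ y ≤ b

lemma lbounds_step {f : LaurentPolynomial R} {a b : ℤ} (h : LBounds f a b) :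
    LBounds (((T 1 : LaurentPolynomial R) - 1) * f) a (b + 1) := by
  obtain ⟨ha, hb, hbd⟩ := h
  refine ⟨?_, ?_, ?_⟩
  · rw [T_sub_one_mul_apply]
    have : f.coeff (a - 1) = 0 := by
      by_contra hne
      have := hbd _ hne
      omega
    rw [this, zero_sub]
    exact neg_ne_zero.mpr ha
  · rw [T_sub_one_mul_apply]
    have h1 : f.coeff (b + 1 - 1) = f.coeff b := by norm_num
    have h2 : f.coeff (b + 1) = 0 := by
      by_contra hne
      have := hbd _ hne
      omega
    rw [h1, h2, sub_zero]
    exact hb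
  · intro y hy
    rw [T_sub_one_mul_apply] at hy
    have : f.coeff (y - 1) ≠ 0 ∨ f.coeff y ≠ 0 := by
      by_contra hcon
      push_neg at hcon
      rw [hcon.1, hcon.2, sub_self] at hy
      exact hy rfl
    rcases this with h' | h'
    · have := hbd _ h'; omega
    · have := hbd _ h'; omega

lemma lbounds_pow {f : LaurentPolynomial R} {a b : ℤ} (h : LBounds f a b) (n : ℕ) :
    LBounds ((((T 1 : LaurentPolynomial R) - 1)) ^ n * f) a (b + n) := by
  induction n with
  | zero => simpa using h
  | succ n ih =>
    have := lbounds_step ih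
    rw [← mul_assoc, ← pow_succ'] at this
    have hcast : b + ((n + 1 : ℕ) : ℤ) = b + (n : ℤ) + 1 := by push_cast; ring
    rw [hcast]
    exact this

lemma exists_lbounds {f : LaurentPolynomial R} (hf : f ≠ 0) : ∃ a b, LBounds f a b := by
  have hne : f.coeff.support.Nonempty := Finsupp.support_nonempty_iff.mpr (mt AddMonoidAlgebra.coeff_eq_zero.mp hf)
  refine ⟨f.coeff.support.min' hne, f.coeff.support.max' hne, ?_, ?_, ?_⟩
  · exact Finsupp.mem_support_iff.mp (f.coeff.support.min'_mem hne)
  · exact Finsupp.mem_support_iff.mp (f.coeff.support.max'_mem hne)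
  · intro y hy
    have hmem : y ∈ f.coeff.support := Finsupp.mem_support_iff.mpr hy
    exact ⟨f.coeff.support.min'_le y hmem, f.coeff.support.le_max' y hmem⟩

/-- An idempotent Laurent polynomial whose coefficients sum to zero is zero. -/
lemma laurent_idem_ev_zero_eq_zero {e : LaurentPolynomial R} (he : IsIdempotentElem e)
    (hev : laurentEv e = 0) : e = 0 := by
  by_contra hne
  obtain ⟨g, hg⟩ := dvd_of_laurentEv_zero hev
  have hgne : g ≠ 0 := by rintro rfl; rw [mul_zero] at hg; exact hne hg
  have hcomm : Commute ((T 1 : LaurentPolynomial R) - 1) g :=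
    ((commute_T 1 g).sub_left (Commute.one_left _))
  have hpow : ∀ n : ℕ, e = ((T 1 : LaurentPolynomial R) - 1) ^ (n + 1) * g ^ (n + 1) := by
    intro n
    have h1 : e ^ (n + 1) = e := by
      induction n with
      | zero => rw [pow_one]
      | succ n ih => rw [pow_succ, ih, he]
    rw [← h1, hg, hcomm.mul_pow]
  obtain ⟨A, B, hA, hB, hbd⟩ := exists_lbounds hne
  -- for each n, get bounds on g ^ (n+1)
  have key : ∀ n : ℕ, A + (n + 1 : ℤ) ≤ B := by
    intro n
    have hgn : g ^ (n + 1) ≠ 0 := by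
      intro h0
      exact hne (by rw [hpow n, h0, mul_zero])
    obtain ⟨a, b, hab⟩ := exists_lbounds hgn
    have hb2 := lbounds_pow hab (n + 1)
    rw [← hpow n] at hb2
    obtain ⟨ha', hb', _⟩ := hb2
    have h1 := hbd _ ha'
    have h2 := hbd _ hb'
    have h3 := hab.2.2 _ hab.1
    push_cast at h2 ⊢
    omega
  have := key (B - A).toNat
  have h4 : (B - A : ℤ) ≤ ((B - A).toNat : ℤ) := Int.self_le_toNat _
  omega

lemma laurent_hoti (h : HasOnlyTrivialIdempotents R) :
    HasOnlyTrivialIdempotents (LaurentPolynomial R) := by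
  intro e he
  have hu : IsIdempotentElem (laurentEv e) := by
    show _ * _ = _
    rw [← map_mul, he]
  rcases h _ hu with h0 | h1
  · exact Or.inl (laurent_idem_ev_zero_eq_zero he h0)
  · right
    have h2 : (1 - e) = 0 :=
      laurent_idem_ev_zero_eq_zero he.one_sub (by rw [map_sub, map_one, h1, sub_self])
    rw [sub_eq_zero] at h2
    exact h2.symm

lemma polynomial_hoti (h : HasOnlyTrivialIdempotents R) :
    HasOnlyTrivialIdempotents (Polynomial R) := by
  intro p hp
  have hl : IsIdempotentElem (Polynomial.toLaurent p) := by
    show _ * _ = _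
    rw [← map_mul, hp]
  rcases laurent_hoti h _ hl with h0 | h1
  · left
    apply Polynomial.toLaurent_injective
    rw [h0, map_zero]
  · right
    apply Polynomial.toLaurent_injective
    rw [h1, map_one]

end Aux

/-- If a ring `R` has only trivial idempotents, then `R[x]`, `R[[x]]` and `R[x, x⁻¹]` are
all i-reversible. -/
theorem polynomial_powerSeries_laurent_isIReversible (R : Type*) [Ring R]
    (h : HasOnlyTrivialIdempotents R) :
    IsIReversible (Polynomial R) ∧ IsIReversible (PowerSeries R) ∧
      IsIReversible (LaurentPolynomial R) := by
  exact ⟨hoti_isIReversible (polynomial_hoti h),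
    hoti_isIReversible (powerSeries_hoti h),
    hoti_isIReversible (laurent_hoti h)⟩
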